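/- arXiv:2102.00983 — 8 statements merged into one kernel-verified Lean document; each statement's English description precedes it below -/
import Mathlib

section
/- Let (D_α)_{α∈A} be a mosaic of GDDs of constant block size k on a point set of size v with b block indices and a = |A| colors. Then b ≥ a², with equality if and only if every D_α is a transversal design with k point classes of size a each and λ₂ = 1 and λ₁ = 0. -/
open Finset

/-- For a (nontrivial) mosaic of GDDs of constant block size `k`, the number of block indices
satisfies `b ≥ a²`, with equality iff every member is a transversal design with `k` point
classes of size `a`, `λ₁ = 0` and `λ₂ = 1` (every block meets every point class in exactly
one point). -/
theorem mosaic_gdd_block_lower_bound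
    {X S A : Type*} [Fintype X] [Fintype S] [Fintype A] [DecidableEq A] [Nonempty X]
    (f : X → S → A) (k r : ℕ)
    (m u lam1 lam2 : A → ℕ) (cls : ∀ α : A, X → Fin (m α))
    (ha : 2 ≤ Fintype.card A)
    (hm2 : ∀ α : A, 2 ≤ m α)
    (hu : ∀ (α : A) (i : Fin (m α)),
      (Finset.univ.filter (fun x => cls α x = i)).card = u α)
    (hlam2 : ∀ α : A, 1 ≤ lam2 α)
    (hk : ∀ (α : A) (s : S), (Finset.univ.filter (fun x => f x s = α)).card = k)
    (hr : ∀ (α : A) (x : X), (Finset.univ.filter (fun s => f x s = α)).card = r)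
    (hl1 : ∀ (α : A) (x y : X), x ≠ y → cls α x = cls α y →
      (Finset.univ.filter (fun s => f x s = α ∧ f y s = α)).card = lam1 α)
    (hl2 : ∀ (α : A) (x y : X), cls α x ≠ cls α y →
      (Finset.univ.filter (fun s => f x s = α ∧ f y s = α)).card = lam2 α) :
    Fintype.card S ≥ Fintype.card A ^ 2 ∧
      (Fintype.card S = Fintype.card A ^ 2 ↔
        ∀ α : A, m α = k ∧ u α = Fintype.card A ∧ lam1 α = 0 ∧ lam2 α = 1 ∧
          ∀ (s : S) (i : Fin (m α)),
            (Finset.univ.filter (fun x => f x s = α ∧ cls α x = i)).card = 1) := by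
  classical
  obtain ⟨x0⟩ := (inferInstance : Nonempty X)
  have hA : Nonempty A := Fintype.card_pos_iff.mp (by omega)
  obtain ⟨α0⟩ := hA
  set a := Fintype.card A with ha_def
  set v := Fintype.card X with hv_def
  set b := Fintype.card S with hb_def
  -- v = m α * u α
  have hvmu : ∀ α, v = m α * u α := by
    intro α
    have h := Finset.card_eq_sum_card_fiberwise
      (f := cls α) (s := (univ : Finset X)) (t := (univ : Finset (Fin (m α))))
      (fun x _ => mem_univ _)
    simp only [hu α, Finset.sum_const, Finset.card_univ, Fintype.card_fin,
      smul_eq_mul] at h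
    exact h
  have hv1 : 1 ≤ v := Fintype.card_pos
  have hu1 : ∀ α, 1 ≤ u α := by
    intro α
    rcases Nat.eq_zero_or_pos (u α) with h | h
    · exfalso; have := hvmu α; rw [h, mul_zero] at this; omega
    · exact h
  have hclass_ex : ∀ (α : A) (i : Fin (m α)), ∃ x, cls α x = i := by
    intro α i
    have h := hu α i
    have hpos : 0 < (univ.filter fun x => cls α x = i).card := by
      rw [h]; exact hu1 α
    obtain ⟨x, hx⟩ := Finset.card_pos.mp hpos
    exact ⟨x, (mem_filter.mp hx).2⟩
  -- S is nonempty
  have hSne : Nonempty S := by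
    obtain ⟨x, hx⟩ := hclass_ex α0 ⟨0, by have := hm2 α0; omega⟩
    obtain ⟨y, hy⟩ := hclass_ex α0 ⟨1, by have := hm2 α0; omega⟩
    have hne : cls α0 x ≠ cls α0 y := by
      rw [hx, hy]; simp [Fin.ext_iff]
    have h := hl2 α0 x y hne
    have hpos : 0 < (univ.filter fun s => f x s = α0 ∧ f y s = α0).card := by
      rw [h]; exact hlam2 α0
    obtain ⟨s, -⟩ := Finset.card_pos.mp hpos
    exact ⟨s⟩
  obtain ⟨s0⟩ := hSne
  -- v = a * k
  have hvak : v = a * k := by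
    have h := Finset.card_eq_sum_card_fiberwise
      (f := fun x => f x s0) (s := (univ : Finset X)) (t := (univ : Finset A))
      (fun x _ => mem_univ _)
    simp only [hk, Finset.sum_const, Finset.card_univ, smul_eq_mul] at h
    exact h
  -- b = a * r
  have hbar : b = a * r := by
    have h := Finset.card_eq_sum_card_fiberwise
      (f := fun s => f x0 s) (s := (univ : Finset S)) (t := (univ : Finset A))
      (fun s _ => mem_univ _)
    simp only [hr, Finset.sum_const, Finset.card_univ, smul_eq_mul] at h
    exact h
  have hk1 : 1 ≤ k := by
    rcases Nat.eq_zero_or_pos k with h | h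
    · exfalso; rw [h, mul_zero] at hvak; omega
    · exact h
  -- the fundamental double counting identity
  have hD : ∀ (α : A) (x : X),
      r * (k - 1) = lam1 α * (u α - 1) + lam2 α * (v - u α) := by
    intro α x
    have key : ∑ y ∈ univ.erase x, (univ.filter fun s => f x s = α ∧ f y s = α).card
        = r * (k - 1) := by
      calc ∑ y ∈ univ.erase x, (univ.filter fun s => f x s = α ∧ f y s = α).card
          = ∑ y ∈ univ.erase x, ∑ s : S, if f x s = α ∧ f y s = α then 1 else 0 := by
            refine Finset.sum_congr rfl fun y _ => ?_
            rw [Finset.card_filter]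
        _ = ∑ s : S, ∑ y ∈ univ.erase x, if f x s = α ∧ f y s = α then 1 else 0 :=
            Finset.sum_comm
        _ = ∑ s : S, if f x s = α then k - 1 else 0 := by
            refine Finset.sum_congr rfl fun s _ => ?_
            by_cases h : f x s = α
            · simp only [h, true_and, if_true]
              have h2 : ∑ y ∈ univ.erase x, (if f y s = α then 1 else 0)
                  = ((univ.erase x).filter fun y => f y s = α).card := by
                rw [Finset.card_filter]
              rw [h2, Finset.filter_erase,
                Finset.card_erase_of_mem (by simp [h]), hk]
            · simp [h]
        _ = ∑ s ∈ univ.filter (fun s => f x s = α), (k - 1) := by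
            rw [Finset.sum_filter]
        _ = r * (k - 1) := by
            rw [Finset.sum_const, hr, smul_eq_mul]
    have key2 : ∑ y ∈ univ.erase x, (univ.filter fun s => f x s = α ∧ f y s = α).card
        = lam1 α * (u α - 1) + lam2 α * (v - u α) := by
      rw [← Finset.sum_filter_add_sum_filter_not (univ.erase x)
        (fun y => cls α y = cls α x)]
      have c1 : ((univ.erase x).filter fun y => cls α y = cls α x).card = u α - 1 := by
        rw [Finset.filter_erase, Finset.card_erase_of_mem (by simp), hu]
      have c2 : ((univ.erase x).filter fun y => ¬ cls α y = cls α x).card = v - u α := by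
        rw [Finset.filter_erase, Finset.erase_eq_of_notMem (by simp)]
        have h := Finset.card_filter_add_card_filter_not
          (s := (univ : Finset X)) (p := fun y => cls α y = cls α x)
        rw [hu, Finset.card_univ] at h
        omega
      have e1 : ∑ y ∈ (univ.erase x).filter (fun y => cls α y = cls α x),
          (univ.filter fun s => f x s = α ∧ f y s = α).card = lam1 α * (u α - 1) := by
        rw [Finset.sum_congr rfl (fun y hy => ?_), Finset.sum_const, c1, smul_eq_mul,
          mul_comm]
        rcases mem_filter.mp hy with ⟨hy1, hy2⟩
        rcases mem_erase.mp hy1 with ⟨hyx, -⟩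
        exact hl1 α x y (Ne.symm hyx) hy2.symm
      have e2 : ∑ y ∈ (univ.erase x).filter (fun y => ¬ cls α y = cls α x),
          (univ.filter fun s => f x s = α ∧ f y s = α).card = lam2 α * (v - u α) := by
        rw [Finset.sum_congr rfl (fun y hy => ?_), Finset.sum_const, c2, smul_eq_mul,
          mul_comm]
        rcases mem_filter.mp hy with ⟨hy1, hy2⟩
        exact hl2 α x y (fun hxy => hy2 hxy.symm)
      rw [e1, e2]
    exact key.symm.trans key2
  have huv : ∀ α, u α < v := by
    intro α
    have h := hvmu α
    have h2 := hm2 α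
    have h1 := hu1 α
    calc u α < 2 * u α := by omega
    _ ≤ m α * u α := Nat.mul_le_mul_right _ h2
    _ = v := h.symm
  have hterm : ∀ α, 1 ≤ lam2 α * (v - u α) := fun α =>
    Nat.mul_pos (hlam2 α) (by have := huv α; omega)
  have hk2 : 2 ≤ k := by
    by_contra hlt
    have hk1' : k - 1 = 0 := by omega
    have h := hD α0 x0
    rw [hk1', mul_zero] at h
    have := hterm α0
    omega
  -- transversality of blocks with λ₁ = 0
  have hE : ∀ α, lam1 α = 0 → ∀ (s : S) (x y : X), f x s = α → f y s = α →
      cls α x = cls α y → x = y := by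
    intro α h0 s x y hx hy hc
    by_contra hne
    have h := hl1 α x y hne hc
    rw [h0, Finset.card_eq_zero] at h
    have hmem : s ∈ (univ.filter fun s' => f x s' = α ∧ f y s' = α) := by simp [hx, hy]
    rw [h] at hmem
    exact absurd hmem (Finset.notMem_empty s)
  have hkm : ∀ α, lam1 α = 0 → k ≤ m α := by
    intro α h0
    have hinj : Set.InjOn (cls α) ↑(univ.filter fun x => f x s0 = α) := by
      intro x hx y hy hc
      simp only [coe_filter, Set.mem_setOf_eq, mem_univ, true_and] at hx hy
      exact hE α h0 s0 x y hx hy hc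
    have h := Finset.card_le_card_of_injOn (cls α) (fun x _ => mem_univ _) hinj
    rw [hk] at h
    simpa using h
  -- the main per-color bound, with equality analysis
  have hmain : ∀ α, a ≤ r ∧ (r = a → m α = k ∧ u α = a ∧ lam1 α = 0 ∧ lam2 α = 1) := by
    intro α
    have hD' := hD α x0
    have hvmu' := hvmu α
    have hm2' := hm2 α
    have hu1' := hu1 α
    have hl2' := hlam2 α
    have huv' := huv α
    have hw : v - u α = u α * (m α - 1) := by
      rw [hvmu', Nat.mul_sub, mul_one, mul_comm]
    by_cases h0 : lam1 α = 0 ∧ 2 ≤ u α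
    · obtain ⟨h0, hu2⟩ := h0
      have hkm' := hkm α h0
      rw [h0, zero_mul, zero_add, hw] at hD'
      -- hD' : r * (k-1) = lam2 α * (u α * (m α - 1))
      have hcross : m α * (k - 1) ≤ k * (m α - 1) := by
        have e1 : m α * (k - 1) = k * m α - m α := by
          rw [Nat.mul_sub, mul_one, mul_comm]
        have e2 : k * (m α - 1) = k * m α - k := by rw [Nat.mul_sub, mul_one]
        rw [e1, e2]
        exact Nat.sub_le_sub_left hkm' _
      have hstep : a * (k * (k - 1)) ≤ r * (k * (k - 1)) := by
        calc a * (k * (k - 1)) = (a * k) * (k - 1) := by ring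
          _ = (m α * u α) * (k - 1) := by rw [← hvak, hvmu']
          _ = u α * (m α * (k - 1)) := by ring
          _ ≤ u α * (k * (m α - 1)) := Nat.mul_le_mul_left _ hcross
          _ = (u α * (m α - 1)) * k := by ring
          _ ≤ (lam2 α * (u α * (m α - 1))) * k :=
              Nat.mul_le_mul_right _ (Nat.le_mul_of_pos_left _ hl2')
          _ = (r * (k - 1)) * k := by rw [hD']
          _ = r * (k * (k - 1)) := by ring
      have hra : a ≤ r :=
        Nat.le_of_mul_le_mul_right hstep (Nat.mul_pos (by omega) (by omega))
      refine ⟨hra, fun hreq => ?_⟩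
      rw [hreq] at hD'
      have hak : a * k = u α * m α := by rw [← hvak, hvmu', mul_comm]
      have hkey : m α * (k - 1) = lam2 α * ((m α - 1) * k) := by
        have h1 : (a * (k - 1)) * k = (lam2 α * (u α * (m α - 1))) * k := by rw [hD']
        have h2 : (a * (k - 1)) * k = u α * (m α * (k - 1)) := by
          calc (a * (k - 1)) * k = (a * k) * (k - 1) := by ring
          _ = (u α * m α) * (k - 1) := by rw [hak]
          _ = u α * (m α * (k - 1)) := by ring
        have h3 : (lam2 α * (u α * (m α - 1))) * k
            = u α * (lam2 α * ((m α - 1) * k)) := by ring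
        have h4 : u α * (m α * (k - 1)) = u α * (lam2 α * ((m α - 1) * k)) :=
          h2.symm.trans (h1.trans h3)
        exact Nat.eq_of_mul_eq_mul_left (by omega) h4
      have hQP : m α * (k - 1) ≤ (m α - 1) * k := by
        rw [mul_comm (m α - 1) k]; exact hcross
      have hQpos : 0 < (m α - 1) * k := Nat.mul_pos (by omega) (by omega)
      have hPpos : 0 < m α * (k - 1) := Nat.mul_pos (by omega) (by omega)
      have hl2eq : lam2 α = 1 := by
        by_contra hne
        have h2' : 2 ≤ lam2 α := by omega
        have hge : 2 * ((m α - 1) * k) ≤ lam2 α * ((m α - 1) * k) :=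
          Nat.mul_le_mul_right _ h2'
        rw [← hkey] at hge
        have h21 : (2 : ℕ) ≤ 1 :=
          Nat.le_of_mul_le_mul_right
            (by rw [one_mul]; exact le_trans hge hQP) hQpos
        omega
      rw [hl2eq, one_mul] at hkey
      have hmk : m α = k := by
        have e1 : (m α - 1) * k = m α * k - k := by rw [Nat.sub_mul, one_mul]
        have e2 : m α * (k - 1) = m α * k - m α := by rw [Nat.mul_sub, mul_one]
        rw [e1, e2] at hkey
        have hkle : k ≤ m α * k := Nat.le_mul_of_pos_left _ (by omega)
        have hmle : m α ≤ m α * k := Nat.le_mul_of_pos_right _ (by omega)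
        omega
      have hua : u α = a := by
        have h5 : u α * m α = a * k := hak.symm
        rw [hmk] at h5
        exact Nat.eq_of_mul_eq_mul_right (by omega) h5
      exact ⟨hmk, hua, h0, hl2eq⟩
    · -- strict inequality branch
      have hstrict : a < r := by
        have hge : v - 1 ≤ r * (k - 1) := by
          rcases Nat.eq_or_lt_of_le hu1' with h1 | h2
          · -- u α = 1
            have hu'' : u α = 1 := h1.symm
            rw [hD', hu'', Nat.sub_self, mul_zero, zero_add]
            exact Nat.le_mul_of_pos_left _ (hlam2 α)
          · have hl1' : 1 ≤ lam1 α := by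
              rcases Nat.eq_zero_or_pos (lam1 α) with hz | hp
              · exact absurd ⟨hz, h2⟩ h0
              · exact hp
            rw [hD']
            calc v - 1 = (u α - 1) + (v - u α) := by omega
            _ ≤ lam1 α * (u α - 1) + lam2 α * (v - u α) :=
                Nat.add_le_add (Nat.le_mul_of_pos_left _ hl1')
                  (Nat.le_mul_of_pos_left _ (hlam2 α))
        by_contra hle
        have hra : r ≤ a := by omega
        have hmono : r * (k - 1) ≤ a * (k - 1) := Nat.mul_le_mul_right _ hra
        have hak1 : a * (k - 1) = a * k - a := by rw [Nat.mul_sub, mul_one]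
        have hle2 : a ≤ a * k := Nat.le_mul_of_pos_right _ (by omega)
        omega
      exact ⟨le_of_lt hstrict, fun hreq => absurd hreq (by omega)⟩
  obtain ⟨hra0, -⟩ := hmain α0
  have hineq : a ^ 2 ≤ b := by
    rw [hbar, pow_two]
    exact Nat.mul_le_mul_left _ hra0
  refine ⟨hineq, ?_, ?_⟩
  · -- equality implies the transversal design structure
    intro hbeq
    have hreq : r = a := by
      rw [hbar, pow_two] at hbeq
      exact (Nat.eq_of_mul_eq_mul_left (by omega) hbeq).symm ▸ rfl
    intro α
    obtain ⟨-, hprops⟩ := hmain α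
    obtain ⟨hmk, hua, h0, hl2eq⟩ := hprops hreq
    refine ⟨hmk, hua, h0, hl2eq, ?_⟩
    intro s i
    have hfib : ∀ j : Fin (m α),
        ((univ.filter fun x => f x s = α).filter fun x => cls α x = j).card ≤ 1 := by
      intro j
      refine Finset.card_le_one.mpr ?_
      intro x hx y hy
      rcases mem_filter.mp hx with ⟨hx1, hx2⟩
      rcases mem_filter.mp hy with ⟨hy1, hy2⟩
      exact hE α h0 s x y (mem_filter.mp hx1).2 (mem_filter.mp hy1).2
        (hx2.trans hy2.symm)
    have hsum := Finset.card_eq_sum_card_fiberwise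
      (f := cls α) (s := univ.filter fun x => f x s = α)
      (t := (univ : Finset (Fin (m α)))) (fun x _ => mem_univ _)
    rw [hk] at hsum
    have hone :
        ((univ.filter fun x => f x s = α).filter fun x => cls α x = i).card = 1 := by
      by_contra hne
      have hj0 : ((univ.filter fun x => f x s = α).filter fun x => cls α x = i).card = 0 := by
        have := hfib i; omega
      have hsplit := Finset.add_sum_erase (univ : Finset (Fin (m α)))
        (fun j' => ((univ.filter fun x => f x s = α).filter fun x => cls α x = j').card)
        (mem_univ i)
      have hle : ∑ j' ∈ univ.erase i,
          ((univ.filter fun x => f x s = α).filter fun x => cls α x = j').card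
          ≤ (univ.erase i).card * 1 :=
        Finset.sum_le_card_nsmul _ _ 1 (fun j' _ => hfib j')
      rw [Finset.card_erase_of_mem (mem_univ i), Finset.card_univ, Fintype.card_fin,
        mul_one] at hle
      beta_reduce at hsplit
      rw [hj0, zero_add] at hsplit
      rw [← hsplit] at hsum
      omega
    rw [Finset.filter_filter] at hone
    exact hone
  · -- converse: the transversal design structure implies equality
    intro H
    obtain ⟨hmk, hua, h0, hl2eq, -⟩ := H α0
    have hD' := hD α0 x0
    rw [h0, zero_mul, zero_add, hl2eq, one_mul, hua] at hD'
    have hak1 : a * (k - 1) = a * k - a := by rw [Nat.mul_sub, mul_one]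
    have hreq : r * (k - 1) = a * (k - 1) := by
      rw [hak1, hD', hvak]
    have hra : r = a := Nat.eq_of_mul_eq_mul_right (by omega) hreq
    rw [hbar, hra, pow_two]
end

section
/- Let D be a resolvable (v,k,r) tactical configuration with parallel classes indexed by a set R and blocks within each parallel class indexed by a set A, and let L be a quasigroup on A. Define, for each α ∈ A, the incidence structure D_α on the same point set and block index set R×A by: p is incident with (i,β) in D_α iff p is incident in D with (i,γ) for the unique γ with L(β,γ)=α. Then (D_α)_{α∈A} is a mosaic, and each D_α is isomorphic to D. -/
/-- General construction of a mosaic from a resolvable tactical configuration and a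
quasigroup: defining `D_α` by `p I_α (i,β)` iff `p I (i,γ)` for the unique `γ` with
`L β γ = α`, the family `(D_α)` is a mosaic and every member is isomorphic to `D`. -/
theorem mosaic_from_resolvable_and_quasigroup
    {P R A : Type*} [Fintype P] [Fintype R] [Fintype A] [DecidableEq A]
    [Nonempty P] [Nonempty R]
    (I : P → R × A → Prop) [∀ p s, Decidable (I p s)] (k r : ℕ)
    (hk : ∀ s : R × A, (Finset.univ.filter (fun p => I p s)).card = k)
    (hr : ∀ p : P, (Finset.univ.filter (fun s => I p s)).card = r)
    (hres : ∀ (p : P) (i : R), ∃! β : A, I p (i, β))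
    (L : A → A → A)
    (hq1 : ∀ α γ : A, ∃! β : A, L α β = γ)
    (hq2 : ∀ β γ : A, ∃! α : A, L α β = γ)
    (J : A → P → R × A → Prop)
    (hJ : ∀ (α : A) (p : P) (i : R) (β : A),
      J α p (i, β) ↔ ∃ γ : A, L β γ = α ∧ I p (i, γ)) :
    (∀ (p : P) (s : R × A), ∃! α : A, J α p s) ∧
    (∀ α : A, ∃ p s, J α p s) ∧
    (∀ α : A, ∃ (e : P ≃ P) (g : (R × A) ≃ (R × A)),
      ∀ (p : P) (s : R × A), J α p s ↔ I (e p) (g s)) := by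

  refine ⟨?_, ?_, ?_⟩
  · rintro p ⟨i, β⟩
    obtain ⟨γ, hγ, huγ⟩ := hres p i
    refine ⟨L β γ, (hJ _ _ _ _).2 ⟨γ, rfl, hγ⟩, ?_⟩
    intro α hα
    obtain ⟨γ', hγ', hIγ'⟩ := (hJ _ _ _ _).1 hα
    rw [huγ γ' hIγ'] at hγ'
    exact hγ'.symm
  · intro α
    obtain ⟨p⟩ := ‹Nonempty P›
    obtain ⟨i⟩ := ‹Nonempty R›
    obtain ⟨γ, hγ, -⟩ := hres p i
    obtain ⟨β, hβ, -⟩ := hq2 γ α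
    exact ⟨p, (i, β), (hJ _ _ _ _).2 ⟨γ, hβ, hγ⟩⟩
  · intro α
    set f : A → A := fun β => Fintype.choose _ (hq1 β α) with hf
    have hfspec : ∀ β, L β (f β) = α := fun β => Fintype.choose_spec _ (hq1 β α)
    set g' : A → A := fun γ => Fintype.choose _ (hq2 γ α) with hg'
    have hg'spec : ∀ γ, L (g' γ) γ = α := fun γ => Fintype.choose_spec _ (hq2 γ α)
    have hli : Function.LeftInverse g' f := by
      intro β
      exact (hq2 (f β) α).unique (hg'spec (f β)) (hfspec β)
    have hri : Function.RightInverse g' f := by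
      intro γ
      exact (hq1 (g' γ) α).unique (hfspec (g' γ)) (hg'spec γ)
    refine ⟨Equiv.refl P, Equiv.prodCongr (Equiv.refl R) ⟨f, g', hli, hri⟩, ?_⟩
    rintro p ⟨i, β⟩
    rw [hJ]
    simp only [Equiv.refl_apply, Equiv.prodCongr_apply, Equiv.coe_refl, Prod.map_apply, id_eq, Equiv.coe_fn_mk]
    constructor
    · rintro ⟨γ, hγ, hI⟩
      have : γ = f β := (hq1 β α).unique hγ (hfspec β)
      exact this ▸ hI
    · intro h
      exact ⟨f β, hfspec β, h⟩
end

section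
/- Let f: X × S → A be the functional form of a mosaic of (v,k,λ) BIBDs. Then f is an optimally universal hash function: for all distinct x, x' ∈ X, |{s ∈ S : f(x,s) = f(x',s)}| / |S| = (v-a)/(a(v-1)), where a = |A| = v/k. -/
/-- The functional form of a mosaic of `(v,k,λ)` BIBDs is an optimally universal hash
function: every collision probability equals `(v-a)/(a(v-1))`. -/
theorem mosaic_bibd_optimally_universal
    {X S A : Type*} [Fintype X] [Fintype S] [Fintype A] [DecidableEq A]
    (f : X → S → A) (k r lam : ℕ)
    (hlam : 1 ≤ lam)
    (hk : ∀ (α : A) (s : S), (Finset.univ.filter (fun x => f x s = α)).card = k)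
    (hr : ∀ (α : A) (x : X), (Finset.univ.filter (fun s => f x s = α)).card = r)
    (hl : ∀ (α : A) (x y : X), x ≠ y →
      (Finset.univ.filter (fun s => f x s = α ∧ f y s = α)).card = lam) :
    ∀ x y : X, x ≠ y →
      ((Finset.univ.filter (fun s => f x s = f y s)).card : ℝ) / (Fintype.card S : ℝ)
        = ((Fintype.card X : ℝ) - (Fintype.card A : ℝ))
          / ((Fintype.card A : ℝ) * ((Fintype.card X : ℝ) - 1)) := by
  intro x y hxy
  by_cases hA : Nonempty A
  case neg =>
    have hAe : IsEmpty A := not_nonempty_iff.mp hA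
    have hSe : IsEmpty S := ⟨fun s => hAe.elim (f x s)⟩
    have h1 : Fintype.card S = 0 := Fintype.card_eq_zero
    have h2 : Fintype.card A = 0 := Fintype.card_eq_zero
    simp [h1, h2]
  case pos =>
  obtain ⟨α0⟩ := hA
  have hSne : Nonempty S := by
    have h := hl α0 x y hxy
    have hpos : 0 < (Finset.univ.filter (fun s => f x s = α0 ∧ f y s = α0)).card := by omega
    obtain ⟨s, _⟩ := Finset.card_pos.mp hpos
    exact ⟨s⟩
  obtain ⟨s0⟩ := hSne
  have hv : Fintype.card X = Fintype.card A * k := by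
    have h1 : (Finset.univ : Finset X).card
        = ∑ α : A, (Finset.univ.filter (fun x => f x s0 = α)).card :=
      Finset.card_eq_sum_card_fiberwise (by simp)
    simpa [hk, Finset.card_univ] using h1
  have hScard : Fintype.card S = Fintype.card A * r := by
    have h1 : (Finset.univ : Finset S).card
        = ∑ α : A, (Finset.univ.filter (fun s => f x s = α)).card :=
      Finset.card_eq_sum_card_fiberwise (by simp)
    simpa [hr, Finset.card_univ] using h1
  have hcolg : ∀ u w : X, u ≠ w →
      (Finset.univ.filter (fun s => f u s = f w s)).card = Fintype.card A * lam := by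
    intro u w huw
    have h1 : (Finset.univ.filter (fun s => f u s = f w s)).card
        = ∑ α : A, ((Finset.univ.filter (fun s => f u s = f w s)).filter
            (fun s => f u s = α)).card :=
      Finset.card_eq_sum_card_fiberwise (by simp)
    have h2 : ∀ α : A, ((Finset.univ.filter (fun s => f u s = f w s)).filter
        (fun s => f u s = α)).card = lam := by
      intro α
      rw [Finset.filter_filter]
      have he : (Finset.univ.filter (fun s => f u s = f w s ∧ f u s = α))
          = (Finset.univ.filter (fun s => f u s = α ∧ f w s = α)) := by
        ext s
        simp only [Finset.mem_filter, Finset.mem_univ, true_and]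
        constructor
        · rintro ⟨h1, h2⟩; exact ⟨h2, h1.symm.trans h2⟩
        · rintro ⟨h1, h2⟩; exact ⟨h1.trans h2.symm, h1⟩
      rw [he, hl α u w huw]
    simp [h1, h2]
  have hk1 : 1 ≤ k := by
    have h := hk (f x s0) s0
    have hx : x ∈ Finset.univ.filter (fun z => f z s0 = f x s0) := by simp
    have := Finset.card_pos.mpr ⟨x, hx⟩
    omega
  have hcount : Fintype.card S * (k - 1) = (Fintype.card X - 1) * (Fintype.card A * lam) := by
    classical
    have swap : ∑ s : S, ∑ z : X, (if z ≠ x ∧ f z s = f x s then (1:ℕ) else 0)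
        = ∑ z : X, ∑ s : S, (if z ≠ x ∧ f z s = f x s then (1:ℕ) else 0) :=
      Finset.sum_comm
    have l1 : ∀ s : S, ∑ z : X, (if z ≠ x ∧ f z s = f x s then (1:ℕ) else 0) = k - 1 := by
      intro s
      rw [← Finset.card_filter]
      have he : (Finset.univ.filter (fun z : X => z ≠ x ∧ f z s = f x s))
          = (Finset.univ.filter (fun z : X => f z s = f x s)).erase x := by
        ext z
        simp only [Finset.mem_filter, Finset.mem_univ, true_and, Finset.mem_erase]
      rw [he, Finset.card_erase_of_mem (by simp), hk (f x s) s]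
    have l2 : ∀ z : X, ∑ s : S, (if z ≠ x ∧ f z s = f x s then (1:ℕ) else 0)
        = if z ≠ x then Fintype.card A * lam else 0 := by
      intro z
      by_cases h : z = x
      · simp [h]
      · simp only [h, ne_eq, not_false_iff, true_and, if_true]
        rw [← Finset.card_filter, hcolg z x h]
    have lhs : ∑ s : S, ∑ z : X, (if z ≠ x ∧ f z s = f x s then (1:ℕ) else 0)
        = Fintype.card S * (k - 1) := by
      simp [l1, Finset.card_univ]
    have rhs : ∑ z : X, ∑ s : S, (if z ≠ x ∧ f z s = f x s then (1:ℕ) else 0)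
        = (Fintype.card X - 1) * (Fintype.card A * lam) := by
      calc ∑ z : X, ∑ s : S, (if z ≠ x ∧ f z s = f x s then (1:ℕ) else 0)
          = ∑ z : X, (if z ≠ x then Fintype.card A * lam else 0) :=
            Finset.sum_congr rfl (fun z _ => l2 z)
        _ = ∑ z ∈ Finset.univ.filter (fun z : X => z ≠ x), Fintype.card A * lam :=
            (Finset.sum_filter _ _).symm
        _ = (Finset.univ.filter (fun z : X => z ≠ x)).card * (Fintype.card A * lam) := by
            rw [Finset.sum_const, smul_eq_mul]
        _ = (Fintype.card X - 1) * (Fintype.card A * lam) := by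
            rw [Finset.filter_ne', Finset.card_erase_of_mem (Finset.mem_univ x),
              Finset.card_univ]
    rw [← lhs, swap, rhs]
  have ha1 : 1 ≤ Fintype.card A := Fintype.card_pos_iff.mpr ⟨α0⟩
  have hr1 : 1 ≤ r := by
    have hSpos : 1 ≤ Fintype.card S := Fintype.card_pos_iff.mpr ⟨s0⟩
    rw [hScard] at hSpos
    rcases Nat.eq_zero_or_pos r with h0 | h1
    · rw [h0, Nat.mul_zero] at hSpos; omega
    · exact h1
  have hv2 : 2 ≤ Fintype.card X := Fintype.one_lt_card_iff_nontrivial.mpr ⟨x, y, hxy⟩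
  have hak2 : 2 ≤ Fintype.card A * k := hv ▸ hv2
  set a : ℕ := Fintype.card A with hadef
  have hnat : a * r * (k - 1) = (a * k - 1) * (a * lam) := by
    have h := hcount
    rw [hScard, hv] at h
    exact h
  have hc' : (a:ℝ) * r * ((k:ℝ) - 1) = ((a:ℝ) * (k:ℝ) - 1) * ((a:ℝ) * lam) := by
    have h1 := congrArg (Nat.cast : ℕ → ℝ) hnat
    push_cast [Nat.cast_sub hk1, Nat.cast_sub (by omega : 1 ≤ a * k)] at h1
    linarith
  have ha0 : (0:ℝ) < a := by exact_mod_cast ha1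
  have hr0 : (0:ℝ) < r := by exact_mod_cast hr1
  have hak1 : (1:ℝ) < (a:ℝ) * k := by
    have h2 : (1:ℕ) < a * k := by omega
    exact_mod_cast h2
  rw [hcolg x y hxy, hScard, hv]
  push_cast
  rw [div_eq_div_iff (mul_pos ha0 hr0).ne' (mul_pos ha0 (by linarith : (0:ℝ) < (a:ℝ)*k - 1)).ne']
  linear_combination (-(a:ℝ)) * hc'
end

section
/- Let f: X × S → A be the functional form of a mosaic of (u,m,k,λ₁,λ₂) GDDs with a common point class partition, all of which are semi-regular (i.e., r > λ₁ and rk = vλ₂). Then f is a universal hash function: for all distinct x, x' ∈ X, |{s : f(x,s) = f(x',s)}| / |S| ≤ 1/|A|. -/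
/-- The functional form of a mosaic of semi-regular `(u,m,k,λ₁,λ₂)` GDDs with a common
point class partition is a universal hash function. -/
theorem mosaic_semiregular_gdd_universal_hash
    {X S A : Type*} [Fintype X] [Fintype S] [Fintype A] [DecidableEq A]
    (f : X → S → A) (u m k r lam1 lam2 : ℕ) (cls : X → Fin m)
    (hu : ∀ i : Fin m, (Finset.univ.filter (fun x => cls x = i)).card = u)
    (hlam2 : 1 ≤ lam2)
    (hk : ∀ (α : A) (s : S), (Finset.univ.filter (fun x => f x s = α)).card = k)
    (hr : ∀ (α : A) (x : X), (Finset.univ.filter (fun s => f x s = α)).card = r)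
    (hl1 : ∀ (α : A) (x y : X), x ≠ y → cls x = cls y →
      (Finset.univ.filter (fun s => f x s = α ∧ f y s = α)).card = lam1)
    (hl2 : ∀ (α : A) (x y : X), cls x ≠ cls y →
      (Finset.univ.filter (fun s => f x s = α ∧ f y s = α)).card = lam2)
    (hsr1 : lam1 < r)
    (hsr2 : r * k = Fintype.card X * lam2) :
    ∀ x y : X, x ≠ y →
      ((Finset.univ.filter (fun s => f x s = f y s)).card : ℝ) / (Fintype.card S : ℝ)
        ≤ 1 / (Fintype.card A : ℝ) := by
  intro x y hxy
  classical
  -- fiber decomposition of agreement sets by the common color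
  have fib : ∀ z w : X, (Finset.univ.filter (fun s => f z s = f w s)).card
      = ∑ α : A, (Finset.univ.filter (fun s : S => f z s = α ∧ f w s = α)).card := by
    intro z w
    rw [Finset.card_eq_sum_card_fiberwise
      (f := fun s : S => f z s) (t := (Finset.univ : Finset A)) (fun s _ => Finset.mem_univ _)]
    refine Finset.sum_congr rfl fun α _ => ?_
    rw [Finset.filter_filter]
    exact congrArg Finset.card (Finset.filter_congr fun s _ =>
      ⟨fun h => ⟨h.2, h.1.symm.trans h.2⟩, fun h => ⟨h.1.trans h.2.symm, h.1⟩⟩)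
  rcases isEmpty_or_nonempty S with hS | hS
  · have h0 : (Finset.univ.filter (fun s => f x s = f y s)).card = 0 := by simp
    rw [h0]
    simp only [Nat.cast_zero, zero_div]
    positivity
  obtain ⟨s0⟩ := hS
  have hA : 0 < Fintype.card A := @Fintype.card_pos A _ ⟨f x s0⟩
  have hvpos : 0 < Fintype.card X := @Fintype.card_pos X _ ⟨x⟩
  have hbpos : 0 < Fintype.card S := @Fintype.card_pos S _ ⟨s0⟩
  -- |S| = |A| * r
  have hb : Fintype.card S = Fintype.card A * r := by
    rw [← Finset.card_univ, Finset.card_eq_sum_card_fiberwise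
      (f := fun s : S => f x s) (t := (Finset.univ : Finset A)) (fun s _ => Finset.mem_univ _)]
    simp [hr]
  -- |X| = |A| * k
  have hv : Fintype.card X = Fintype.card A * k := by
    rw [← Finset.card_univ, Finset.card_eq_sum_card_fiberwise
      (f := fun z : X => f z s0) (t := (Finset.univ : Finset A)) (fun z _ => Finset.mem_univ _)]
    simp [hk]
  have hk0 : 0 < k := Nat.pos_of_ne_zero fun h => by
    rw [h, Nat.mul_zero] at hv; omega
  have hu1 : 0 < u := (hu (cls x)) ▸ Finset.card_pos.mpr ⟨x, by simp⟩
  have huv : u ≤ Fintype.card X := by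
    rw [← hu (cls x)]
    exact (Finset.card_filter_le _ _).trans (le_of_eq Finset.card_univ)
  -- values of the agreement counts
  have csame : ∀ w : X, w ≠ x → cls w = cls x →
      (Finset.univ.filter (fun s => f x s = f w s)).card = Fintype.card A * lam1 := by
    intro w hw hc
    rw [fib x w]
    have hval : ∀ α : A, (Finset.univ.filter (fun s : S => f x s = α ∧ f w s = α)).card = lam1 :=
      fun α => hl1 α x w (Ne.symm hw) hc.symm
    simp [hval]
  have cdiff : ∀ w : X, ¬ cls w = cls x →
      (Finset.univ.filter (fun s => f x s = f w s)).card = Fintype.card A * lam2 := by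
    intro w hc
    rw [fib x w]
    have hval : ∀ α : A, (Finset.univ.filter (fun s : S => f x s = α ∧ f w s = α)).card = lam2 :=
      fun α => hl2 α x w (fun h => hc h.symm)
    simp [hval]
  -- double counting: ∑_w |{s : f x s = f w s}| = |S| * k
  have stepA : ∑ w : X, (Finset.univ.filter (fun s => f x s = f w s)).card
      = Fintype.card S * k := by
    have h1 : ∀ w : X, (Finset.univ.filter (fun s => f x s = f w s)).card
        = ∑ s : S, if f x s = f w s then 1 else 0 := fun w => Finset.card_filter _ _
    simp only [h1]
    rw [Finset.sum_comm]
    have h2 : ∀ s : S, (∑ w : X, if f x s = f w s then 1 else 0) = k := by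
      intro s
      rw [← Finset.card_filter]
      rw [Finset.filter_congr (q := fun w => f w s = f x s) (fun w _ => eq_comm)]
      exact hk (f x s) s
    simp [h2, Finset.sum_const, Finset.card_univ, mul_comm]
  -- split the sum over w
  have cardE1 : ((Finset.univ.erase x).filter (fun w => cls w = cls x)).card = u - 1 := by
    rw [Finset.filter_erase, Finset.card_erase_of_mem (by simp), hu (cls x)]
  have cardE2 : ((Finset.univ.erase x).filter (fun w => ¬ cls w = cls x)).card
      = Fintype.card X - u := by
    have h3 := Finset.card_filter_add_card_filter_not
      (s := Finset.univ.erase x) (p := fun w => cls w = cls x)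
    have h4 : (Finset.univ.erase x).card = Fintype.card X - 1 := by
      rw [Finset.card_erase_of_mem (Finset.mem_univ x), Finset.card_univ]
    rw [cardE1, h4] at h3
    omega
  have stepB : ∑ w : X, (Finset.univ.filter (fun s => f x s = f w s)).card
      = Fintype.card S + (u - 1) * (Fintype.card A * lam1)
        + (Fintype.card X - u) * (Fintype.card A * lam2) := by
    rw [← Finset.add_sum_erase _ _ (Finset.mem_univ x)]
    have hx : (Finset.univ.filter (fun s => f x s = f x s)).card = Fintype.card S := by
      simp
    have e1 : ∑ w ∈ (Finset.univ.erase x).filter (fun w => cls w = cls x),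
        (Finset.univ.filter (fun s => f x s = f w s)).card
        = (u - 1) * (Fintype.card A * lam1) := by
      rw [Finset.sum_const_nat (m := Fintype.card A * lam1) (fun w hw => by
        simp only [Finset.mem_filter, Finset.mem_erase] at hw
        exact csame w hw.1.1 hw.2), cardE1]
    have e2 : ∑ w ∈ (Finset.univ.erase x).filter (fun w => ¬ cls w = cls x),
        (Finset.univ.filter (fun s => f x s = f w s)).card
        = (Fintype.card X - u) * (Fintype.card A * lam2) := by
      rw [Finset.sum_const_nat (m := Fintype.card A * lam2) (fun w hw => by
        simp only [Finset.mem_filter, Finset.mem_erase] at hw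
        exact cdiff w hw.2), cardE2]
    rw [hx, ← Finset.sum_filter_add_sum_filter_not (Finset.univ.erase x)
      (fun w => cls w = cls x), e1, e2, add_assoc]
  have hbig : Fintype.card S * k
      = Fintype.card S + (u - 1) * (Fintype.card A * lam1)
        + (Fintype.card X - u) * (Fintype.card A * lam2) := by
    rw [← stepA, stepB]
  -- cancel |A|
  have hcancel : Fintype.card X * lam2
      = r + (u - 1) * lam1 + (Fintype.card X - u) * lam2 := by
    apply Nat.eq_of_mul_eq_mul_left hA
    calc Fintype.card A * (Fintype.card X * lam2)
        = (r * k) * Fintype.card A := by rw [hsr2]; ring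
      _ = Fintype.card S * k := by rw [hb]; ring
      _ = Fintype.card S + (u - 1) * (Fintype.card A * lam1)
          + (Fintype.card X - u) * (Fintype.card A * lam2) := hbig
      _ = Fintype.card A * (r + (u - 1) * lam1 + (Fintype.card X - u) * lam2) := by
          rw [hb]; ring
  have key : u * lam2 = r + (u - 1) * lam1 := by
    have hsub : (Fintype.card X - u) * lam2 = Fintype.card X * lam2 - u * lam2 :=
      Nat.sub_mul _ _ _
    have hle : u * lam2 ≤ Fintype.card X * lam2 := Nat.mul_le_mul_right _ huv
    generalize hP : Fintype.card X * lam2 = P at hcancel hsub hle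
    generalize hQ : u * lam2 = Q at hsub hle ⊢
    generalize hR : (u - 1) * lam1 = R at hcancel ⊢
    generalize hW : (Fintype.card X - u) * lam2 = W at hcancel hsub
    omega
  have hlt : lam1 < lam2 := by
    obtain ⟨u', rfl⟩ : ∃ u', u = u' + 1 := ⟨u - 1, by omega⟩
    rw [Nat.add_sub_cancel] at key
    have h1 : (u' + 1) * lam1 < (u' + 1) * lam2 := by
      calc (u' + 1) * lam1 = lam1 + u' * lam1 := by ring
        _ < r + u' * lam1 := Nat.add_lt_add_right hsr1 _
        _ = (u' + 1) * lam2 := key.symm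
    exact Nat.lt_of_mul_lt_mul_left h1
  have hr2 : r = Fintype.card A * lam2 :=
    Nat.eq_of_mul_eq_mul_right hk0 (by rw [hsr2, hv]; ring)
  -- the agreement count is at most |A| * lam2
  have hcle : (Finset.univ.filter (fun s => f x s = f y s)).card ≤ Fintype.card A * lam2 := by
    by_cases hc : cls y = cls x
    · rw [csame y (Ne.symm hxy) hc]
      exact Nat.mul_le_mul_left _ hlt.le
    · rw [cdiff y hc]
  have hfin : (Finset.univ.filter (fun s => f x s = f y s)).card * Fintype.card A
      ≤ Fintype.card S := by
    rw [hb, hr2]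
    calc (Finset.univ.filter (fun s => f x s = f y s)).card * Fintype.card A
        ≤ (Fintype.card A * lam2) * Fintype.card A := Nat.mul_le_mul_right _ hcle
      _ = Fintype.card A * (Fintype.card A * lam2) := by ring
  rw [div_le_div_iff₀ (by exact_mod_cast hbpos) (by exact_mod_cast hA), one_mul]
  exact_mod_cast hfin
end

section
/- A (u,m,k,λ₁,λ₂) semi-regular GDD satisfies λ₁ ≤ λ₂. -/
open Finset

/-- Double counting pairs of incidences. -/
lemma gdd_count_pairs {X S : Type*} [Fintype S] (I : X → S → Prop)
    [∀ x s, Decidable (I x s)] (G H : Finset X) :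
    ∑ s : S, (G.filter (fun x => I x s)).card * (H.filter (fun x => I x s)).card
      = ∑ x ∈ G, ∑ y ∈ H, (Finset.univ.filter (fun s => I x s ∧ I y s)).card := by
  have : ∀ s : S,
      (G.filter (fun x => I x s)).card * (H.filter (fun x => I x s)).card
        = ∑ x ∈ G, ∑ y ∈ H, (if I x s ∧ I y s then 1 else 0) := by
    intro s
    rw [Finset.card_filter, Finset.card_filter, Finset.sum_mul_sum]
    refine Finset.sum_congr rfl fun x _ => Finset.sum_congr rfl fun y _ => ?_
    by_cases h1 : I x s <;> by_cases h2 : I y s <;> simp [h1, h2]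
  simp only [this]
  rw [Finset.sum_comm]
  refine Finset.sum_congr rfl fun x _ => ?_
  rw [Finset.sum_comm]
  refine Finset.sum_congr rfl fun y _ => ?_
  rw [Finset.card_filter]

/-- A `(u,m,k,λ₁,λ₂)` semi-regular GDD satisfies `λ₁ ≤ λ₂`. -/
theorem semiregular_gdd_lambda_le
    {X S : Type*} [Fintype X] [Fintype S] [Nonempty X]
    (I : X → S → Prop) [∀ x s, Decidable (I x s)]
    (u m k r lam1 lam2 : ℕ) (cls : X → Fin m)
    (hu : ∀ i : Fin m, (Finset.univ.filter (fun x => cls x = i)).card = u)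
    (hlam2 : 1 ≤ lam2)
    (hk : ∀ s : S, (Finset.univ.filter (fun x => I x s)).card = k)
    (hr : ∀ x : X, (Finset.univ.filter (fun s => I x s)).card = r)
    (hl1 : ∀ x y : X, x ≠ y → cls x = cls y →
      (Finset.univ.filter (fun s => I x s ∧ I y s)).card = lam1)
    (hl2 : ∀ x y : X, cls x ≠ cls y →
      (Finset.univ.filter (fun s => I x s ∧ I y s)).card = lam2)
    (hsr1 : lam1 < r)
    (hsr2 : r * k = Fintype.card X * lam2) :
    lam1 ≤ lam2 := by
  classical
  set v := Fintype.card X with hv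
  obtain ⟨x0⟩ := ‹Nonempty X›
  set i := cls x0 with hi
  set G : Finset X := Finset.univ.filter (fun x => cls x = i) with hGdef
  set H : Finset X := Finset.univ.filter (fun x => ¬ cls x = i) with hHdef
  have hGcard : G.card = u := hu i
  have hx0G : x0 ∈ G := by simp [hGdef, hi]
  have hu1 : 1 ≤ u := by
    rw [← hGcard]; exact Finset.card_pos.mpr ⟨x0, hx0G⟩
  have hGH : G.card + H.card = v := by
    rw [hGdef, hHdef, Finset.card_filter_add_card_filter_not, Finset.card_univ]
  have hHcard : H.card = v - u := by omega
  have huv : u ≤ v := by omega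
  -- d s + e s = k
  have hde : ∀ s : S, (G.filter (fun x => I x s)).card
      + (H.filter (fun x => I x s)).card = k := by
    intro s
    rw [hGdef, hHdef, Finset.filter_comm, Finset.filter_comm (fun x => ¬ cls x = i),
      Finset.card_filter_add_card_filter_not]
    exact hk s
  -- first double count : sum of d s * d s
  have hGG : ∑ s : S, (G.filter (fun x => I x s)).card * (G.filter (fun x => I x s)).card
      = u * (r + (u - 1) * lam1) := by
    rw [gdd_count_pairs]
    have : ∀ x ∈ G, ∑ y ∈ G, (Finset.univ.filter (fun s => I x s ∧ I y s)).card
        = r + (u - 1) * lam1 := by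
      intro x hx
      rw [← Finset.add_sum_erase _ _ hx]
      have h1 : (Finset.univ.filter (fun s => I x s ∧ I x s)).card = r := by
        rw [← hr x]; congr 1; ext s; simp
      have h2 : ∀ y ∈ G.erase x,
          (Finset.univ.filter (fun s => I x s ∧ I y s)).card = lam1 := by
        intro y hy
        have hyx : y ≠ x := Finset.ne_of_mem_erase hy
        have hyG : y ∈ G := Finset.mem_of_mem_erase hy
        have hcx : cls x = i := (Finset.mem_filter.mp hx).2
        have hcy : cls y = i := (Finset.mem_filter.mp hyG).2
        exact hl1 x y (Ne.symm hyx) (hcx.trans hcy.symm)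
      rw [h1, Finset.sum_congr rfl h2, Finset.sum_const, Finset.card_erase_of_mem hx,
        hGcard, smul_eq_mul]
    rw [Finset.sum_congr rfl this, Finset.sum_const, hGcard, smul_eq_mul]
  -- second double count : sum of d s * e s
  have hGHsum : ∑ s : S, (G.filter (fun x => I x s)).card * (H.filter (fun x => I x s)).card
      = u * ((v - u) * lam2) := by
    rw [gdd_count_pairs]
    have : ∀ x ∈ G, ∑ y ∈ H, (Finset.univ.filter (fun s => I x s ∧ I y s)).card
        = (v - u) * lam2 := by
      intro x hx
      have hcx : cls x = i := (Finset.mem_filter.mp hx).2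
      have h2 : ∀ y ∈ H, (Finset.univ.filter (fun s => I x s ∧ I y s)).card = lam2 := by
        intro y hy
        have hcy : ¬ cls y = i := (Finset.mem_filter.mp hy).2
        exact hl2 x y (by rw [hcx]; exact fun h => hcy h.symm)
      rw [Finset.sum_congr rfl h2, Finset.sum_const, hHcard, smul_eq_mul]
    rw [Finset.sum_congr rfl this, Finset.sum_const, hGcard, smul_eq_mul]
  -- third : sum of d s * k = u * r * k
  have hdsum : ∑ s : S, (G.filter (fun x => I x s)).card = u * r := by
    have h1 : ∀ s : S, (G.filter (fun x => I x s)).card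
        = ∑ x ∈ G, (if I x s then 1 else 0) := fun s => Finset.card_filter _ _
    simp only [h1]
    rw [Finset.sum_comm]
    have h2 : ∀ x ∈ G, ∑ s : S, (if I x s then 1 else 0) = r := by
      intro x _
      rw [← Finset.card_filter]; exact hr x
    rw [Finset.sum_congr rfl h2, Finset.sum_const, hGcard, smul_eq_mul]
  have hdk : ∑ s : S, (G.filter (fun x => I x s)).card * k = u * (v * lam2) := by
    rw [← Finset.sum_mul, hdsum, mul_assoc, hsr2]
  -- combine
  have hsplit : ∑ s : S, (G.filter (fun x => I x s)).card * k
      = ∑ s : S, (G.filter (fun x => I x s)).card * (G.filter (fun x => I x s)).card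
        + ∑ s : S, (G.filter (fun x => I x s)).card * (H.filter (fun x => I x s)).card := by
    rw [← Finset.sum_add_distrib]
    refine Finset.sum_congr rfl fun s _ => ?_
    rw [← Nat.mul_add, hde s]
  have key : u * (r + (u - 1) * lam1) + u * ((v - u) * lam2) = u * (v * lam2) := by
    rw [← hGG, ← hGHsum, ← hsplit, hdk]
  have key2 : r + (u - 1) * lam1 + (v - u) * lam2 = v * lam2 := by
    have := Nat.eq_of_mul_eq_mul_left (by omega : 0 < u)
      (by rw [Nat.mul_add, key] : u * ((r + (u - 1) * lam1) + (v - u) * lam2) = u * (v * lam2))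
    exact this
  have key3 : r + (u - 1) * lam1 = u * lam2 := by
    have hvu : (v - u) * lam2 + u * lam2 = v * lam2 := by
      rw [← Nat.add_mul]; congr 1; omega
    omega
  -- conclude
  have : u * lam1 < u * lam2 := by
    have h1 : u * lam1 = lam1 + (u - 1) * lam1 := by
      have h0 : u = 1 + (u - 1) := by omega
      conv_lhs => rw [h0]
      rw [Nat.add_mul, Nat.one_mul]
    omega
  exact le_of_lt (Nat.lt_of_mul_lt_mul_left this)
end

section
/- There is no nontrivial (b,v,a) orthogonal array (with a ≥ 2 and v > k for the induced block size k) whose induced function f: X × S → A additionally satisfies that |{x : f(x,s)=α}| is a constant k independent of s and α. Equivalently, if a mosaic of (v,k,λ) BIBDs is induced by an orthogonal array (so that |{s : f(x,s)=α, f(x',s)=α'}| = λ for all distinct x,x' and all α,α'), then v = k and a = 1. -/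
/-- There is no nontrivial orthogonal array whose induced function also has constant
color class sizes within each column: if `f` comes from a `(b,v,a)` orthogonal array
(every ordered pair of symbols appears `λ` times in every pair of distinct rows) and
`|{x : f x s = α}| = k` for all `s, α`, then `v = k` and `a = 1`. -/
theorem no_orthogonal_array_with_constant_color_classes
    {X S A : Type*} [Fintype X] [Fintype S] [Fintype A] [DecidableEq A]
    [Nonempty X] [Nonempty S]
    (f : X → S → A) (k lam : ℕ)
    (hOA : ∀ x y : X, x ≠ y → ∀ α β : A,
      (Finset.univ.filter (fun s => f x s = α ∧ f y s = β)).card = lam)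
    (hk : ∀ (s : S) (α : A), (Finset.univ.filter (fun x => f x s = α)).card = k) :
    Fintype.card X = k ∧ Fintype.card A = 1 := by
  classical
  obtain ⟨s₀⟩ := (inferInstance : Nonempty S)
  -- |X| = |A| * k
  have hA : Fintype.card X = Fintype.card A * k := by
    rw [← Finset.card_univ,
      Finset.card_eq_sum_card_fiberwise (f := fun x => f x s₀)
        (t := Finset.univ) (by simp)]
    simp [hk]
  rcases lt_or_ge 1 (Fintype.card X) with h1 | h1
  · obtain ⟨x₀, y₀, hxy₀⟩ := Fintype.one_lt_card_iff.mp h1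
    -- |S| = |A| * |A| * lam
    have hS : Fintype.card S = Fintype.card A * Fintype.card A * lam := by
      rw [← Finset.card_univ,
        Finset.card_eq_sum_card_fiberwise (f := fun s => (f x₀ s, f y₀ s))
          (t := Finset.univ) (by simp)]
      have hp : ∀ p : A × A,
          (Finset.univ.filter fun s => (f x₀ s, f y₀ s) = p).card = lam := by
        rintro ⟨α, β⟩
        rw [← hOA x₀ y₀ hxy₀ α β]
        congr 1
        ext s
        simp [Prod.ext_iff]
      simp [hp, Fintype.card_prod]
    -- row count: for x ≠ y, #{s : f x s = f y s} = |A| * lam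
    have hrow : ∀ x y : X, x ≠ y →
        (Finset.univ.filter fun s => f x s = f y s).card = Fintype.card A * lam := by
      intro x y hxy
      rw [Finset.card_eq_sum_card_fiberwise (f := fun s => f x s)
        (t := Finset.univ) (by simp)]
      have hα : ∀ α : A,
          ((Finset.univ.filter fun s => f x s = f y s).filter
            fun s => f x s = α).card = lam := by
        intro α
        rw [← hOA x y hxy α α]
        congr 1
        ext s
        simp only [Finset.filter_filter, Finset.mem_filter, Finset.mem_univ, true_and]
        constructor
        · rintro ⟨h1, h2⟩; exact ⟨h2, h1.symm.trans h2⟩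
        · rintro ⟨h1, h2⟩; exact ⟨h1.trans h2.symm, h1⟩
      simp [hα]
    -- column count: for each s and x, #{y ≠ x : f y s = f x s} = k - 1
    have hcol : ∀ (s : S) (x : X),
        ((Finset.univ.erase x).filter fun y => f x s = f y s).card = k - 1 := by
      intro s x
      have : (Finset.univ.erase x).filter (fun y => f x s = f y s)
          = (Finset.univ.filter fun y => f y s = f x s).erase x := by
        ext y
        simp [Finset.mem_erase, Finset.mem_filter, eq_comm, and_comm]
      rw [this, Finset.card_erase_of_mem (by simp), hk s (f x s)]
    -- double counting
    have key : Fintype.card X * ((Fintype.card X - 1) * (Fintype.card A * lam))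
        = Fintype.card S * (Fintype.card X * (k - 1)) := by
      have lhs : ∑ x : X, ∑ y ∈ Finset.univ.erase x,
          (Finset.univ.filter fun s => f x s = f y s).card
          = Fintype.card X * ((Fintype.card X - 1) * (Fintype.card A * lam)) := by
        rw [Finset.sum_congr rfl (fun x _ => Finset.sum_congr rfl
          (fun y hy => hrow x y (by
            rcases Finset.mem_erase.mp hy with ⟨hne, _⟩
            exact fun hxx => hne (hxx ▸ rfl))))]
        simp [Finset.card_erase_of_mem, Finset.card_univ, mul_comm, mul_assoc,
          mul_left_comm]
      have rhs : ∑ x : X, ∑ y ∈ Finset.univ.erase x,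
          (Finset.univ.filter fun s => f x s = f y s).card
          = Fintype.card S * (Fintype.card X * (k - 1)) := by
        have step : ∀ x : X, ∑ y ∈ Finset.univ.erase x,
            (Finset.univ.filter fun s => f x s = f y s).card
            = ∑ s : S, ((Finset.univ.erase x).filter fun y => f x s = f y s).card := by
          intro x
          simp only [Finset.card_filter]
          rw [Finset.sum_comm]
        calc ∑ x : X, ∑ y ∈ Finset.univ.erase x,
              (Finset.univ.filter fun s => f x s = f y s).card
            = ∑ x : X, ∑ s : S,
              ((Finset.univ.erase x).filter fun y => f x s = f y s).card := by
              exact Finset.sum_congr rfl fun x _ => step x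
          _ = ∑ s : S, ∑ x : X,
              ((Finset.univ.erase x).filter fun y => f x s = f y s).card :=
              Finset.sum_comm
          _ = ∑ s : S, ∑ x : X, (k - 1) := by
              exact Finset.sum_congr rfl fun s _ =>
                Finset.sum_congr rfl fun x _ => hcol s x
          _ = Fintype.card S * (Fintype.card X * (k - 1)) := by simp [mul_comm]
      rw [← lhs, rhs]
    -- now pure arithmetic
    set n := Fintype.card X with hn
    set aA := Fintype.card A with haA
    have hSpos : 0 < Fintype.card S := Fintype.card_pos
    have hlam : 0 < lam := by
      rcases Nat.eq_zero_or_pos lam with h | h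
      · rw [hS, h, mul_zero] at hSpos; omega
      · exact h
    have : Nonempty A := ⟨f x₀ s₀⟩
    have haApos : 0 < aA := Fintype.card_pos
    have hk1 : 1 ≤ k := by
      rcases Nat.eq_zero_or_pos k with h | h
      · rw [h, mul_zero] at hA; omega
      · exact h
    obtain ⟨k', rfl⟩ : ∃ k', k = k' + 1 := ⟨k - 1, by omega⟩
    -- key becomes: n * (n-1) * aA * lam = (aA*aA*lam) * (n * k')
    rw [hS] at key
    have key2 : (n * aA * lam) * (n - 1) = (n * aA * lam) * (aA * k') := by
      calc (n * aA * lam) * (n - 1)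
          = n * ((n - 1) * (aA * lam)) := by ring
        _ = aA * aA * lam * (n * (k' + 1 - 1)) := key
        _ = (n * aA * lam) * (aA * k') := by simp; ring
    have hpos : 0 < n * aA * lam := by positivity
    have key3 : n - 1 = aA * k' := Nat.eq_of_mul_eq_mul_left hpos key2
    have hA' : n = aA * k' + aA := by rw [hA]; ring
    have haA1 : aA = 1 := by omega
    constructor
    · rw [hA, haA1, one_mul]
    · exact haA1
  · -- |X| = 1
    have hx1 : Fintype.card X = 1 := le_antisymm h1 Fintype.card_pos
    rw [hx1] at hA
    rcases mul_eq_one.mp hA.symm with ⟨ha, hk1⟩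
    exact ⟨by rw [hx1, hk1], ha⟩
end

section
/- Let W: X → Z be a channel (stochastic matrix) and Π = {X₁,…,X_m} a partition of X into sets of size u, with R_Π: Π → X the channel sending X_i to the uniform distribution on X_i, P_X the uniform distribution on X and P_Π the uniform distribution on Π. Then D₂(W ‖ P_X W | P_X) − log u ≤ D₂(R_Π W ‖ P_X W | P_Π) ≤ D₂(W ‖ P_X W | P_X), where D₂(V‖Q|P) = log Σ_x P(x) exp(D₂(V(·|x)‖Q)) and D₂(P‖Q) = log Σ_z P(z)²/Q(z). -/
/-- Output distribution of the channel `W` under uniform input. -/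
noncomputable def uniformOutput {X Z : Type*} [Fintype X]
    (W : X → Z → ℝ) (z : Z) : ℝ :=
  (1 / (Fintype.card X : ℝ)) * ∑ x, W x z

/-- Conditional Rényi 2-divergence `D₂(W ‖ P_X W | P_X)` of the channel `W` against its
uniform-input output distribution, with uniform input distribution (base-2 logarithm;
the inner sum runs over outputs of positive probability). -/
noncomputable def renyiTwoDivChannel {X Z : Type*} [Fintype X] [Fintype Z]
    (W : X → Z → ℝ) : ℝ :=
  Real.logb 2 (∑ x : X, (1 / (Fintype.card X : ℝ)) *
    ∑ z ∈ Finset.univ.filter (fun z => 0 < uniformOutput W z),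
      (W x z) ^ 2 / uniformOutput W z)

/-- Conditional Rényi 2-divergence `D₂(R_Π W ‖ P_X W | P_Π)` of the class-averaged channel
`R_Π W` against the uniform-input output distribution of `W`, with uniform distribution on
the partition `Π` given by `cls` (classes of size `u`). -/
noncomputable def renyiTwoDivClassChannel {X Z : Type*} [Fintype X] [Fintype Z]
    (W : X → Z → ℝ) (m u : ℕ) (cls : X → Fin m) : ℝ :=
  Real.logb 2 (∑ i : Fin m, (1 / (m : ℝ)) *
    ∑ z ∈ Finset.univ.filter (fun z => 0 < uniformOutput W z),
      ((1 / (u : ℝ)) * ∑ x ∈ Finset.univ.filter (fun x => cls x = i), W x z) ^ 2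
        / uniformOutput W z)

/-- For a channel `W : X → Z` and a partition `Π` of `X` into `m` classes of size `u`,
`D₂(W‖P_X W|P_X) − log u ≤ D₂(R_Π W‖P_X W|P_Π) ≤ D₂(W‖P_X W|P_X)`. -/
theorem renyiTwoDiv_class_sandwich
    {X Z : Type*} [Fintype X] [Fintype Z] [Nonempty X]
    (W : X → Z → ℝ) (hW0 : ∀ x z, 0 ≤ W x z) (hW1 : ∀ x, ∑ z, W x z = 1)
    (m u : ℕ) (cls : X → Fin m)
    (hu : ∀ i : Fin m, (Finset.univ.filter (fun x => cls x = i)).card = u) :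
    renyiTwoDivChannel W - Real.logb 2 u ≤ renyiTwoDivClassChannel W m u cls
      ∧ renyiTwoDivClassChannel W m u cls ≤ renyiTwoDivChannel W := by
  classical
  have hn0 : (0:ℕ) < Fintype.card X := Fintype.card_pos
  set n : ℕ := Fintype.card X with hn
  set Q : Z → ℝ := uniformOutput W with hQdef
  set S : Finset Z := Finset.univ.filter (fun z => 0 < Q z) with hSdef
  set fib : Fin m → Finset X := fun i => Finset.univ.filter (fun x => cls x = i) with hfib
  -- partition cardinality
  have hmu : (m * u : ℕ) = n := by
    have h := Finset.card_eq_sum_card_fiberwise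
      (f := cls) (s := (Finset.univ : Finset X)) (t := Finset.univ)
      (fun x _ => Finset.mem_univ _)
    simp only [Finset.card_univ, hu, Finset.sum_const, smul_eq_mul,
      Fintype.card_fin] at h
    omega
  have hu0 : 0 < u := by
    rcases Nat.eq_zero_or_pos u with h | h
    · rw [h, mul_zero] at hmu; omega
    · exact h
  have hm0 : 0 < m := by
    rcases Nat.eq_zero_or_pos m with h | h
    · rw [h, zero_mul] at hmu; omega
    · exact h
  have huR : (0:ℝ) < (u:ℝ) := by exact_mod_cast hu0
  have hmR : (0:ℝ) < (m:ℝ) := by exact_mod_cast hm0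
  have hnR : (0:ℝ) < (n:ℝ) := by exact_mod_cast hn0
  set g : X → ℝ := fun x => ∑ z ∈ S, (W x z) ^ 2 / Q z with hg
  have hg0 : ∀ x, 0 ≤ g x := by
    intro x
    refine Finset.sum_nonneg fun z hz => ?_
    have hQz : 0 < Q z := (Finset.mem_filter.mp hz).2
    positivity
  set A : ℝ := ∑ x : X, (1 / (n:ℝ)) * g x with hA
  set B : ℝ := ∑ i : Fin m, (1 / (m:ℝ)) *
      ∑ z ∈ S, ((1 / (u:ℝ)) * ∑ x ∈ fib i, W x z) ^ 2 / Q z with hB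
  have hAe : renyiTwoDivChannel W = Real.logb 2 A := rfl
  have hBe : renyiTwoDivClassChannel W m u cls = Real.logb 2 B := rfl
  -- middle quantity
  set M : ℝ := ∑ i : Fin m, (1 / (m:ℝ)) *
      ∑ z ∈ S, ((1 / (u:ℝ)) * ∑ x ∈ fib i, (W x z) ^ 2) / Q z with hM
  have hstep : ∀ i : Fin m,
      (∑ z ∈ S, ((1 / (u:ℝ)) * ∑ x ∈ fib i, (W x z) ^ 2) / Q z)
        = (1 / (u:ℝ)) * ∑ x ∈ fib i, g x := by
    intro i
    calc ∑ z ∈ S, ((1 / (u:ℝ)) * ∑ x ∈ fib i, (W x z) ^ 2) / Q z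
        = ∑ z ∈ S, ∑ x ∈ fib i, (1 / (u:ℝ)) * ((W x z) ^ 2 / Q z) := by
          refine Finset.sum_congr rfl fun z _ => ?_
          rw [Finset.mul_sum, Finset.sum_div]
          exact Finset.sum_congr rfl fun x _ => mul_div_assoc _ _ _
      _ = ∑ x ∈ fib i, ∑ z ∈ S, (1 / (u:ℝ)) * ((W x z) ^ 2 / Q z) :=
          Finset.sum_comm
      _ = (1 / (u:ℝ)) * ∑ x ∈ fib i, g x := by
          rw [Finset.mul_sum]
          exact Finset.sum_congr rfl fun x _ => (Finset.mul_sum _ _ _).symm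
  have hMA : M = A := by
    calc M = ∑ i : Fin m, (1 / ((m:ℝ) * u)) * ∑ x ∈ fib i, g x := by
            refine Finset.sum_congr rfl fun i _ => ?_
            rw [hstep i]
            field_simp
      _ = (1 / ((m:ℝ) * u)) * ∑ i : Fin m, ∑ x ∈ fib i, g x := by
            rw [Finset.mul_sum]
      _ = (1 / ((m:ℝ) * u)) * ∑ x : X, g x := by
            congr 1
            exact Finset.sum_fiberwise_of_maps_to (fun x _ => Finset.mem_univ (cls x)) g
      _ = A := by
            rw [hA, Finset.mul_sum]
            refine Finset.sum_congr rfl fun x _ => ?_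
            have hcast : ((m:ℝ) * u) = (n:ℝ) := by exact_mod_cast hmu
            rw [hcast]
  -- upper bound: B ≤ M
  have hBM : B ≤ M := by
    refine Finset.sum_le_sum fun i _ => ?_
    refine mul_le_mul_of_nonneg_left ?_ (by positivity)
    refine Finset.sum_le_sum fun z hz => ?_
    have hQz : 0 < Q z := (Finset.mem_filter.mp hz).2
    rw [div_le_div_iff_of_pos_right hQz]
    have hcard : ((fib i).card : ℝ) = (u:ℝ) := by exact_mod_cast hu i
    have hcs : (∑ x ∈ fib i, W x z) ^ 2 ≤ ((fib i).card : ℝ) * ∑ x ∈ fib i, (W x z) ^ 2 :=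
      sq_sum_le_card_mul_sum_sq
    rw [hcard] at hcs
    rw [mul_pow]
    calc (1 / (u:ℝ)) ^ 2 * (∑ x ∈ fib i, W x z) ^ 2
        ≤ (1 / (u:ℝ)) ^ 2 * ((u:ℝ) * ∑ x ∈ fib i, (W x z) ^ 2) :=
          mul_le_mul_of_nonneg_left hcs (by positivity)
      _ = (1 / (u:ℝ)) * ∑ x ∈ fib i, (W x z) ^ 2 := by
          field_simp
  -- lower bound: M ≤ u * B
  have hMB : M ≤ (u:ℝ) * B := by
    have hub : (u:ℝ) * B = ∑ i : Fin m, (1 / (m:ℝ)) *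
        ∑ z ∈ S, (u:ℝ) * (((1 / (u:ℝ)) * ∑ x ∈ fib i, W x z) ^ 2 / Q z) := by
      rw [hB, Finset.mul_sum]
      refine Finset.sum_congr rfl fun i _ => ?_
      simp only [Finset.mul_sum]
      exact Finset.sum_congr rfl fun z _ => by ring
    rw [hub, hM]
    refine Finset.sum_le_sum fun i _ => ?_
    refine mul_le_mul_of_nonneg_left ?_ (by positivity : (0:ℝ) ≤ 1/(m:ℝ))
    refine Finset.sum_le_sum fun z hz => ?_
    have hQz : 0 < Q z := (Finset.mem_filter.mp hz).2
    rw [← mul_div_assoc, div_le_div_iff_of_pos_right hQz]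
    have hsq : ∑ x ∈ fib i, (W x z) ^ 2 ≤ (∑ x ∈ fib i, W x z) ^ 2 :=
      Finset.sum_sq_le_sq_sum_of_nonneg (s := fib i) (f := fun x => W x z) (fun x _ => hW0 x z)
    rw [mul_pow]
    calc (1 / (u:ℝ)) * ∑ x ∈ fib i, (W x z) ^ 2
        ≤ (1 / (u:ℝ)) * (∑ x ∈ fib i, W x z) ^ 2 :=
          mul_le_mul_of_nonneg_left hsq (by positivity)
      _ = (u:ℝ) * ((1 / (u:ℝ)) ^ 2 * (∑ x ∈ fib i, W x z) ^ 2) := by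
          field_simp
  -- positivity of A
  have hApos : 0 < A := by
    obtain ⟨x0⟩ := ‹Nonempty X›
    have hx0 : ∃ z : Z, 0 < W x0 z := by
      by_contra h
      push_neg at h
      have hzero : ∑ z, W x0 z = 0 :=
        Finset.sum_eq_zero fun z _ => le_antisymm (h z) (hW0 x0 z)
      rw [hW1 x0] at hzero
      norm_num at hzero
    obtain ⟨z0, hz0⟩ := hx0
    have hQz0 : 0 < Q z0 := by
      rw [hQdef]
      unfold uniformOutput
      have h1 : W x0 z0 ≤ ∑ x, W x z0 :=
        Finset.single_le_sum (fun x _ => hW0 x z0) (Finset.mem_univ x0)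
      have h2 : (0:ℝ) < ∑ x, W x z0 := lt_of_lt_of_le hz0 h1
      rw [← hn]
      positivity
    have hz0S : z0 ∈ S := by
      rw [hSdef]
      simp [hQz0]
    have hgx0 : 0 < g x0 := by
      rw [hg]
      refine Finset.sum_pos' (fun z hz => ?_) ⟨z0, hz0S, ?_⟩
      · have hQz : 0 < Q z := (Finset.mem_filter.mp hz).2
        positivity
      · positivity
    rw [hA]
    refine Finset.sum_pos'
      (fun x _ => mul_nonneg (by positivity) (hg0 x))
      ⟨x0, Finset.mem_univ x0, mul_pos (by positivity) hgx0⟩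
  have hApos' : 0 < M := hMA ▸ hApos
  have hBpos : 0 < B := by
    have huB : (0:ℝ) < (u:ℝ) * B := lt_of_lt_of_le hApos' hMB
    by_contra h
    push_neg at h
    nlinarith [mul_nonpos_of_nonneg_of_nonpos huR.le h]
  constructor
  · rw [hAe, hBe]
    have h1 : A ≤ (u:ℝ) * B := hMA ▸ hMB
    have h2 : Real.logb 2 A ≤ Real.logb 2 ((u:ℝ) * B) :=
      Real.logb_le_logb_of_le one_lt_two hApos h1
    rw [Real.logb_mul (ne_of_gt huR) (ne_of_gt hBpos)] at h2
    linarith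
  · rw [hAe, hBe]
    exact Real.logb_le_logb_of_le one_lt_two hBpos (hMA ▸ hBM)
end

section
/- Let N be the incidence matrix of a (u,m,k,λ₁,λ₂) GDD with point set X of size v = um, block index set S of size b, replication number r, and point class partition Π. Let P_{XZ} be a joint distribution on X × Z with full marginal support on Z, and define P(x,z,s) = (1/r) P_{XZ}(x,z) N(x,s). Then for every z ∈ Z, exp(D₂(P_{S|Z=z} ‖ uniform on S)) = (v(r−λ₁)/(kr)) · 2^{−H₂(X|Z=z)} + (v(λ₁−λ₂)/(kr)) · 2^{−H₂(X_Π|Z=z)} + (1 − ((r−λ₁)+(λ₁−λ₂)u)/(kr)), where H₂(X|Z=z) = −log Σ_x P_{X|Z}(x|z)² and X_Π is the point-class coarsening of X. -/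
/-- Privacy amplification, one design at a time: for the incidence matrix of a
`(u,m,k,λ₁,λ₂)` GDD, the conditional seed distribution given `Z = z` satisfies
`exp₂(D₂(P_{S|Z=z} ‖ unif_S)) = (v(r−λ₁)/(kr)) 2^{−H₂(X|Z=z)}
  + (v(λ₁−λ₂)/(kr)) 2^{−H₂(X_Π|Z=z)} + (1 − ((r−λ₁)+(λ₁−λ₂)u)/(kr))`. -/
theorem gdd_privacy_amplification_renyi_identity
    {X S Z : Type*} [Fintype X] [Fintype S] [Fintype Z]
    (I : X → S → Prop) [∀ x s, Decidable (I x s)]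
    (u m k r lam1 lam2 : ℕ) (cls : X → Fin m)
    (hu : ∀ i : Fin m, (Finset.univ.filter (fun x => cls x = i)).card = u)
    (hlam2 : 1 ≤ lam2)
    (hk : ∀ s : S, (Finset.univ.filter (fun x => I x s)).card = k)
    (hr : ∀ x : X, (Finset.univ.filter (fun s => I x s)).card = r)
    (hl1 : ∀ x y : X, x ≠ y → cls x = cls y →
      (Finset.univ.filter (fun s => I x s ∧ I y s)).card = lam1)
    (hl2 : ∀ x y : X, cls x ≠ cls y →
      (Finset.univ.filter (fun s => I x s ∧ I y s)).card = lam2)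
    (hk0 : 0 < k) (hr0 : 0 < r)
    (P : X → Z → ℝ) (hP0 : ∀ x z, 0 ≤ P x z) (hP1 : ∑ x, ∑ z, P x z = 1)
    (hZ : ∀ z : Z, 0 < ∑ x, P x z) :
    ∀ z : Z,
      (Fintype.card S : ℝ) * ∑ s : S,
          ((∑ x ∈ Finset.univ.filter (fun x => I x s), P x z)
            / ((r : ℝ) * ∑ x, P x z)) ^ 2
        = ((Fintype.card X : ℝ) * ((r : ℝ) - (lam1 : ℝ)) / ((k : ℝ) * (r : ℝ)))
              * ∑ x, (P x z / ∑ x', P x' z) ^ 2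
          + ((Fintype.card X : ℝ) * ((lam1 : ℝ) - (lam2 : ℝ)) / ((k : ℝ) * (r : ℝ)))
              * ∑ i : Fin m,
                  ((∑ x ∈ Finset.univ.filter (fun x => cls x = i), P x z)
                    / ∑ x', P x' z) ^ 2
          + (1 - (((r : ℝ) - (lam1 : ℝ)) + ((lam1 : ℝ) - (lam2 : ℝ)) * (u : ℝ))
              / ((k : ℝ) * (r : ℝ))) := by
  classical
  intro z
  have hT : (0:ℝ) < ∑ x, P x z := hZ z
  have hXne : Nonempty X := by
    by_contra h
    rw [not_nonempty_iff] at h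
    simp [Finset.univ_eq_empty] at hT
  obtain ⟨x0⟩ := hXne
  -- counting: number of blocks containing both x and y, as a real number
  have hcount : ∀ x y : X,
      ((Finset.univ.filter (fun s => I x s ∧ I y s)).card : ℝ)
        = (lam2:ℝ) + ((lam1:ℝ) - lam2) * (if cls y = cls x then 1 else 0)
          + ((r:ℝ) - lam1) * (if x = y then 1 else 0) := by
    intro x y
    by_cases hxy : x = y
    · subst hxy
      simp only [and_self, eq_self_iff_true, if_true, hr x]
      ring
    · by_cases hc : cls y = cls x
      · rw [hl1 x y hxy hc.symm]
        simp only [if_pos hc, if_neg hxy]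
        ring
      · rw [hl2 x y (fun h => hc h.symm)]
        simp only [if_neg hc, if_neg hxy]
        ring
  -- |S| * k = |X| * r
  have hbk : Fintype.card S * k = Fintype.card X * r := by
    have h1 : ∑ s : S, (Finset.univ.filter (fun x => I x s)).card
        = ∑ x : X, (Finset.univ.filter (fun s => I x s)).card := by
      simp_rw [Finset.card_filter]
      exact Finset.sum_comm
    simp only [hk, hr, Finset.sum_const, Finset.card_univ, smul_eq_mul] at h1
    exact h1
  -- k * r = (r - lam1) + (lam1 - lam2) * u + lam2 * |X|
  have hkr : (k:ℝ) * r
      = ((r:ℝ) - lam1) + ((lam1:ℝ) - lam2) * u + (lam2:ℝ) * (Fintype.card X) := by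
    have hNa : ∑ y : X, (Finset.univ.filter (fun s => I x0 s ∧ I y s)).card = r * k := by
      have h1 : ∑ y : X, (Finset.univ.filter (fun s => I x0 s ∧ I y s)).card
          = ∑ s : S, ∑ y : X, (if I x0 s ∧ I y s then 1 else 0) := by
        simp_rw [Finset.card_filter]
        exact Finset.sum_comm
      rw [h1]
      have h2 : ∀ s : S, (∑ y : X, if I x0 s ∧ I y s then 1 else 0)
          = if I x0 s then k else 0 := by
        intro s
        by_cases h : I x0 s
        · simp only [h, true_and, if_true]
          rw [← Finset.card_filter, hk]
        · simp [h]
      simp_rw [h2]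
      rw [← Finset.sum_filter, Finset.sum_const, hr x0, smul_eq_mul]
    have h1 : ∑ y : X, ((Finset.univ.filter (fun s => I x0 s ∧ I y s)).card : ℝ)
        = (r:ℝ) * k := by exact_mod_cast hNa
    have h2 : ∑ y : X, ((Finset.univ.filter (fun s => I x0 s ∧ I y s)).card : ℝ)
        = (lam2:ℝ) * (Fintype.card X) + ((lam1:ℝ) - lam2) * u + ((r:ℝ) - lam1) := by
      simp_rw [hcount x0]
      rw [Finset.sum_add_distrib, Finset.sum_add_distrib, ← Finset.mul_sum,
        ← Finset.mul_sum]
      have e1 : (∑ _y : X, (lam2:ℝ)) = (Fintype.card X : ℝ) * lam2 := by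
        rw [Finset.sum_const, Finset.card_univ, nsmul_eq_mul]
      have e2 : (∑ y : X, if cls y = cls x0 then (1:ℝ) else 0) = (u:ℝ) := by
        rw [← Finset.sum_filter, Finset.sum_const, hu (cls x0), nsmul_eq_mul, mul_one]
      have e3 : (∑ y : X, if x0 = y then (1:ℝ) else 0) = 1 := by
        rw [Finset.sum_ite_eq]
        simp
      rw [e1, e2, e3]
      ring
    rw [h1] at h2
    linarith [h2]
  -- the key sum identity
  have hA : ∑ s : S, (∑ x ∈ Finset.univ.filter (fun x => I x s), P x z) ^ 2
      = ((r:ℝ) - lam1) * (∑ x, (P x z) ^ 2)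
        + ((lam1:ℝ) - lam2) * (∑ i : Fin m,
            (∑ x ∈ Finset.univ.filter (fun x => cls x = i), P x z) ^ 2)
        + (lam2:ℝ) * (∑ x, P x z) ^ 2 := by
    have step1 : ∀ s : S, (∑ x ∈ Finset.univ.filter (fun x => I x s), P x z) ^ 2
        = ∑ x : X, ∑ y : X, (if I x s ∧ I y s then P x z * P y z else 0) := by
      intro s
      rw [sq, Finset.sum_mul_sum]
      rw [Finset.sum_filter]
      refine Finset.sum_congr rfl fun x _ => ?_
      rw [Finset.sum_filter]  -- may not match; handle below
      by_cases h : I x s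
      · simp [h]
      · simp [h]
    simp_rw [step1]
    rw [Finset.sum_comm]
    have swap2 : ∀ x : X, (∑ s : S, ∑ y : X, (if I x s ∧ I y s then P x z * P y z else 0))
        = ∑ y : X, ∑ s : S, (if I x s ∧ I y s then P x z * P y z else 0) :=
      fun x => Finset.sum_comm
    simp_rw [swap2]
    have inner : ∀ x y : X, (∑ s : S, if I x s ∧ I y s then P x z * P y z else 0)
        = P x z * P y z * ((Finset.univ.filter (fun s => I x s ∧ I y s)).card : ℝ) := by
      intro x y
      rw [← Finset.sum_filter, Finset.sum_const, nsmul_eq_mul]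
      ring
    simp_rw [inner, hcount]
    have key : ∀ x y : X,
        P x z * P y z * ((lam2:ℝ) + ((lam1:ℝ) - lam2) * (if cls y = cls x then 1 else 0)
          + ((r:ℝ) - lam1) * (if x = y then 1 else 0))
        = (lam2:ℝ) * (P x z * P y z)
          + ((lam1:ℝ) - lam2) * (if cls y = cls x then P x z * P y z else 0)
          + ((r:ℝ) - lam1) * (if x = y then P x z * P y z else 0) := by
      intro x y
      split_ifs <;> ring
    simp_rw [key]
    simp_rw [Finset.sum_add_distrib]
    have pull : ∀ (c : ℝ) (f : X → X → ℝ),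
        ∑ x : X, ∑ y : X, c * f x y = c * ∑ x : X, ∑ y : X, f x y := by
      intro c f
      rw [Finset.mul_sum]
      exact Finset.sum_congr rfl fun x _ => (Finset.mul_sum _ _ _).symm
    have E1 : ∑ x : X, ∑ y : X, (lam2:ℝ) * (P x z * P y z)
        = (lam2:ℝ) * (∑ x, P x z) ^ 2 := by
      rw [pull ((lam2:ℝ)) (fun x y => P x z * P y z), ← Finset.sum_mul_sum, sq]
    have E3 : ∑ x : X, ∑ y : X, ((r:ℝ) - lam1) * (if x = y then P x z * P y z else 0)
        = ((r:ℝ) - lam1) * ∑ x, (P x z) ^ 2 := by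
      rw [pull ((r:ℝ) - lam1) (fun x y => if x = y then P x z * P y z else 0)]
      congr 1
      refine Finset.sum_congr rfl fun x _ => ?_
      rw [Finset.sum_ite_eq]
      simp [sq]
    have E2 : ∑ x : X, ∑ y : X, ((lam1:ℝ) - lam2) * (if cls y = cls x then P x z * P y z else 0)
        = ((lam1:ℝ) - lam2) * ∑ i : Fin m,
            (∑ x ∈ Finset.univ.filter (fun x => cls x = i), P x z) ^ 2 := by
      rw [pull ((lam1:ℝ) - lam2) (fun x y => if cls y = cls x then P x z * P y z else 0)]
      congr 1
      have rhs : ∀ i : Fin m, (∑ x ∈ Finset.univ.filter (fun x => cls x = i), P x z) ^ 2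
          = ∑ x ∈ Finset.univ.filter (fun x => cls x = i),
              ∑ y : X, (if cls y = cls x then P x z * P y z else 0) := by
        intro i
        rw [sq, Finset.sum_mul_sum]
        refine Finset.sum_congr rfl fun x hx => ?_
        have hx' : cls x = i := by simpa using hx
        rw [← hx', Finset.sum_filter]
      rw [show (∑ i : Fin m, (∑ x ∈ Finset.univ.filter (fun x => cls x = i), P x z) ^ 2)
          = ∑ i : Fin m, ∑ x ∈ Finset.univ.filter (fun x => cls x = i),
              ∑ y : X, (if cls y = cls x then P x z * P y z else 0)
          from Finset.sum_congr rfl fun i _ => rhs i]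
      exact (Finset.sum_fiberwise _ cls _).symm
    rw [E1, E2, E3]
    ring
  -- final algebra
  have hTne : (∑ x, P x z) ≠ 0 := ne_of_gt hT
  have hkne : (k:ℝ) ≠ 0 := Nat.cast_ne_zero.mpr hk0.ne'
  have hrne : (r:ℝ) ≠ 0 := Nat.cast_ne_zero.mpr hr0.ne'
  have hS : (Fintype.card S : ℝ) = (Fintype.card X : ℝ) * r / k := by
    field_simp
    exact_mod_cast hbk
  have hsub : ((r:ℝ) - lam1) + ((lam1:ℝ) - lam2) * (u:ℝ)
      = (k:ℝ) * r - (lam2:ℝ) * (Fintype.card X) := by linarith [hkr]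
  simp_rw [div_pow, ← Finset.sum_div]
  rw [hA, hS, hsub]
  field_simp
  ring
end
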